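/- Let u be a classical solution of the heat equation on [0,T]×[−1,0] satisfying u(0,x) = 0 for all x ∈ [−1,0], u(t,−1) = 0 for all t ∈ [0,T], and the nonlocal boundary relation u(t,0) = −∫_0^t e^{s−t} ∂_x u(s,0) ds for all t ∈ [0,T]. Then u is identically zero on [0,T]×[−1,0]. (This is the classical-solution form of the statement that in the point-mass coupling the kernel of I + W is trivial, where (Wg)(t) = L₀⁻¹(∫_0^t e^{s−t} g(s) ds) and L₀ is the Neumann-to-Dirichlet operator of the heat equation with zero initial data.) -/

import Mathlib

open Set Real MeasureTheory intervalIntegral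

/-- A classical solution of the heat equation `∂_t u = ∂_x² u` on `[0,T] × [−1,0]`:
`u` is continuous on the closed rectangle, the partial derivatives `ut = ∂_t u`,
`ux = ∂_x u`, `uxx = ∂_x² u` exist and are continuous there, and `∂_t u = ∂_x² u`. -/
structure IsHeatSol (T : ℝ) (u ut ux uxx : ℝ → ℝ → ℝ) : Prop where
  contu : ContinuousOn (fun p : ℝ × ℝ => u p.1 p.2) (Icc 0 T ×ˢ Icc (-1) 0)
  hut : ∀ t ∈ Icc (0:ℝ) T, ∀ x ∈ Icc (-1:ℝ) 0, HasDerivAt (fun τ => u τ x) (ut t x) t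
  hux : ∀ t ∈ Icc (0:ℝ) T, ∀ x ∈ Icc (-1:ℝ) 0, HasDerivAt (fun y => u t y) (ux t x) x
  huxx : ∀ t ∈ Icc (0:ℝ) T, ∀ x ∈ Icc (-1:ℝ) 0, HasDerivAt (fun y => ux t y) (uxx t x) x
  contut : ContinuousOn (fun p : ℝ × ℝ => ut p.1 p.2) (Icc 0 T ×ˢ Icc (-1) 0)
  contux : ContinuousOn (fun p : ℝ × ℝ => ux p.1 p.2) (Icc 0 T ×ˢ Icc (-1) 0)
  contuxx : ContinuousOn (fun p : ℝ × ℝ => uxx p.1 p.2) (Icc 0 T ×ˢ Icc (-1) 0)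
  heat : ∀ t ∈ Icc (0:ℝ) T, ∀ x ∈ Icc (-1:ℝ) 0, ut t x = uxx t x

/-- A classical solution of the heat equation on `[0,T] × [−1,0]`
with zero initial data, `u(t,−1) = 0`, and the nonlocal boundary relation
`u(t,0) = −∫_0^t e^{s−t} ∂_x u(s,0) ds` vanishes identically. (Classical-solution
form of `ker (I + W) = {0}` in the point-mass coupling, where
`(Wg)(t) = L₀⁻¹(∫_0^t e^{s−t} g(s) ds)`.) -/
theorem kernel_I_plus_W_trivial (T : ℝ) (hT : 0 ≤ T) (u ut ux uxx : ℝ → ℝ → ℝ)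
    (hu : IsHeatSol T u ut ux uxx)
    (hinit : ∀ x ∈ Icc (-1:ℝ) 0, u 0 x = 0)
    (hbu : ∀ t ∈ Icc (0:ℝ) T, u t (-1) = 0)
    (hbd : ∀ t ∈ Icc (0:ℝ) T, u t 0 = -∫ s in (0:ℝ)..t, Real.exp (s - t) * ux s 0) :
    ∀ t ∈ Icc (0:ℝ) T, ∀ x ∈ Icc (-1:ℝ) 0, u t x = 0 := by
  obtain ⟨contu, hut, hux, huxx, contut, contux, contuxx, heat⟩ := hu
  have hIcc : uIcc (-1:ℝ) 0 = Icc (-1:ℝ) 0 := uIcc_of_le (by norm_num)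
  have hI : uIoc (-1:ℝ) 0 = Ioc (-1:ℝ) 0 := uIoc_of_le (by norm_num)
  -- clamping functions
  set cT : ℝ → ℝ := fun s => max 0 (min s T) with hcT
  set cX : ℝ → ℝ := fun y => max (-1) (min y 0) with hcX
  have hcT_mem : ∀ s, cT s ∈ Icc (0:ℝ) T :=
    fun s => ⟨le_max_left _ _, max_le hT (min_le_right _ _)⟩
  have hcX_mem : ∀ y, cX y ∈ Icc (-1:ℝ) 0 :=
    fun y => ⟨le_max_left _ _, max_le (by norm_num) (min_le_right _ _)⟩
  have hcT_eq : ∀ s ∈ Icc (0:ℝ) T, cT s = s := by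
    intro s hs; simp [hcT, min_eq_left hs.2, max_eq_right hs.1]
  have hcX_eq : ∀ y ∈ Icc (-1:ℝ) 0, cX y = y := by
    intro y hy; simp [hcX, min_eq_left hy.2, max_eq_right hy.1]
  -- sections in x are continuous
  have sec : ∀ v : ℝ → ℝ → ℝ, ContinuousOn (fun p : ℝ × ℝ => v p.1 p.2) (Icc 0 T ×ˢ Icc (-1) 0) →
      ∀ t ∈ Icc (0:ℝ) T, ContinuousOn (fun x => v t x) (Icc (-1:ℝ) 0) := by
    intro v hv t ht
    have : ContinuousOn ((fun p : ℝ × ℝ => v p.1 p.2) ∘ fun x => (t, x)) (Icc (-1:ℝ) 0) :=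
      hv.comp (Continuous.continuousOn (by fun_prop)) (fun x hx => ⟨ht, hx⟩)
    exact this
  -- the boundary flux and its clamped version
  set g : ℝ → ℝ := fun s => ux s 0 with hg
  have contg : ContinuousOn g (Icc (0:ℝ) T) := by
    have : ContinuousOn ((fun p : ℝ × ℝ => ux p.1 p.2) ∘ fun s => (s, (0:ℝ))) (Icc (0:ℝ) T) :=
      contux.comp (Continuous.continuousOn (by fun_prop))
        (fun s hs => ⟨hs, by norm_num, le_refl 0⟩)
    exact this
  set gc : ℝ → ℝ := fun s => g (cT s) with hgcdef
  have hgc_cont : Continuous gc := contg.comp_continuous (by fun_prop) hcT_mem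
  have hgc_eq : ∀ s ∈ Icc (0:ℝ) T, gc s = g s := fun s hs => by
    simp only [hgcdef, hcT_eq s hs]
  -- the ODE satisfied by the boundary value
  set P : ℝ → ℝ := fun t => ∫ s in (0:ℝ)..t, Real.exp s * gc s with hPdef
  have hP : ∀ t, HasDerivAt P (Real.exp t * gc t) t := fun t =>
    ((Real.continuous_exp.mul hgc_cont).integral_hasStrictDerivAt 0 t).hasDerivAt
  set H : ℝ → ℝ := fun t => -(Real.exp (-t) * P t) with hHdef
  have hH' : ∀ t, HasDerivAt H (-H t - gc t) t := by
    intro t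
    have h1 : HasDerivAt (fun t : ℝ => Real.exp (-t)) (-Real.exp (-t)) t := by
      simpa using (hasDerivAt_neg t).exp
    have h2 := (h1.mul (hP t)).neg
    refine h2.congr_deriv ?_
    have h0 : Real.exp (-t) * Real.exp t = 1 := by rw [← Real.exp_add]; simp
    have h3 : Real.exp (-t) * (Real.exp t * gc t) = gc t := by
      rw [← mul_assoc, h0, one_mul]
    have hHt : H t = -(Real.exp (-t) * P t) := rfl
    rw [hHt]
    linarith
  have hHcont : Continuous H := by
    have hPc : Continuous P := by
      rw [continuous_iff_continuousAt]; exact fun t => (hP t).continuousAt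
    fun_prop
  -- boundary value equals H on [0,T]
  have hHu : ∀ t ∈ Icc (0:ℝ) T, u t 0 = H t := by
    intro t ht
    rw [hbd t ht]
    have hcongr : (∫ s in (0:ℝ)..t, Real.exp (s - t) * ux s 0)
        = ∫ s in (0:ℝ)..t, Real.exp (-t) * (Real.exp s * gc s) := by
      apply intervalIntegral.integral_congr
      intro s hs
      rw [uIcc_of_le ht.1] at hs
      have hsT : s ∈ Icc (0:ℝ) T := ⟨hs.1, le_trans hs.2 ht.2⟩
      show Real.exp (s - t) * ux s 0 = Real.exp (-t) * (Real.exp s * gc s)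
      rw [hgc_eq s hsT]
      rw [show s - t = s + (-t) by ring, Real.exp_add]
      show Real.exp s * Real.exp (-t) * g s = _
      ring
    rw [hcongr, intervalIntegral.integral_const_mul]
  -- derivative of the bulk energy at interior points
  have hG : ∀ t₀ ∈ Ioo (0:ℝ) T, HasDerivAt (fun t => ∫ x in (-1:ℝ)..0, (u t x)^2)
      (∫ x in (-1:ℝ)..0, 2 * u t₀ x * ut t₀ x) t₀ := by
    intro t₀ ht₀
    obtain ⟨C, hC⟩ := (((isCompact_Icc).prod isCompact_Icc).exists_bound_of_continuousOn
      (f := fun p : ℝ × ℝ => 2 * u p.1 p.2 * ut p.1 p.2)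
      ((continuousOn_const.mul contu).mul contut))
    set ε := min t₀ (T - t₀) with hε
    have hεpos : 0 < ε := lt_min ht₀.1 (by linarith [ht₀.2])
    have hball : Metric.ball t₀ ε ⊆ Icc 0 T := by
      intro t ht
      rw [Metric.mem_ball, Real.dist_eq, abs_lt] at ht
      have h1 : min t₀ (T - t₀) ≤ t₀ := min_le_left _ _
      have h2 : min t₀ (T - t₀) ≤ T - t₀ := min_le_right _ _
      constructor
      · have := ht.1; rw [← hε] at *; linarith
      · have := ht.2; rw [← hε] at *; linarith
    have key := intervalIntegral.hasDerivAt_integral_of_dominated_loc_of_deriv_le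
      (F := fun t x => (u t x)^2) (F' := fun t x => 2 * u t x * ut t x) (x₀ := t₀)
      (a := (-1:ℝ)) (b := 0) (μ := volume) (bound := fun _ => C) (Metric.ball_mem_nhds t₀ hεpos)
      ?_ ?_ ?_ ?_ ?_ ?_
    · exact key.2
    · refine Filter.eventually_of_mem (Metric.ball_mem_nhds t₀ hεpos) (fun t ht => ?_)
      have htT := hball ht
      rw [hI]
      exact (((sec u contu t htT).pow 2).mono Ioc_subset_Icc_self).aestronglyMeasurable
        measurableSet_Ioc
    · apply ContinuousOn.intervalIntegrable
      rw [hIcc]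
      exact (sec u contu t₀ (hball (Metric.mem_ball_self hεpos))).pow 2
    · rw [hI]
      have ht₀T := hball (Metric.mem_ball_self hεpos)
      have : ContinuousOn (fun x => 2 * u t₀ x * ut t₀ x) (Icc (-1:ℝ) 0) :=
        ((continuousOn_const.mul (sec u contu t₀ ht₀T)).mul (sec ut contut t₀ ht₀T))
      exact (this.mono Ioc_subset_Icc_self).aestronglyMeasurable measurableSet_Ioc
    · refine Filter.Eventually.of_forall (fun x hx t ht => ?_)
      have hx' : x ∈ Icc (-1:ℝ) 0 := by rw [hI] at hx; exact Ioc_subset_Icc_self hx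
      exact hC (t, x) ⟨hball ht, hx'⟩
    · exact intervalIntegrable_const
    · refine Filter.Eventually.of_forall (fun x hx t ht => ?_)
      have hx' : x ∈ Icc (-1:ℝ) 0 := by rw [hI] at hx; exact Ioc_subset_Icc_self hx
      have := (hut t (hball ht) x hx').pow 2
      refine this.congr_deriv ?_
      ring
  -- integration by parts identity
  have hIBP : ∀ t ∈ Icc (0:ℝ) T, (∫ x in (-1:ℝ)..0, 2 * u t x * ut t x)
      = 2 * (u t 0 * ux t 0) - 2 * ∫ x in (-1:ℝ)..0, (ux t x)^2 := by
    intro t ht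
    have ibp : ∫ x in (-1:ℝ)..0, ((ux t x)^2 + u t x * uxx t x)
        = u t 0 * ux t 0 - u t (-1) * ux t (-1) := by
      apply intervalIntegral.integral_eq_sub_of_hasDerivAt
        (f := fun x => u t x * ux t x)
      · intro x hx
        rw [hIcc] at hx
        have := (hux t ht x hx).mul (huxx t ht x hx)
        refine this.congr_deriv ?_
        ring
      · apply ContinuousOn.intervalIntegrable
        rw [hIcc]
        exact ((sec ux contux t ht).pow 2).add ((sec u contu t ht).mul (sec uxx contuxx t ht))
    have hint1 : IntervalIntegrable (fun x => (ux t x)^2) volume (-1) 0 := by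
      apply ContinuousOn.intervalIntegrable; rw [hIcc]; exact (sec ux contux t ht).pow 2
    have hint2 : IntervalIntegrable (fun x => u t x * uxx t x) volume (-1) 0 := by
      apply ContinuousOn.intervalIntegrable; rw [hIcc]
      exact (sec u contu t ht).mul (sec uxx contuxx t ht)
    have hsplit : (∫ x in (-1:ℝ)..0, ((ux t x)^2 + u t x * uxx t x))
        = (∫ x in (-1:ℝ)..0, (ux t x)^2) + ∫ x in (-1:ℝ)..0, u t x * uxx t x :=
      intervalIntegral.integral_add hint1 hint2
    have hcongr : (∫ x in (-1:ℝ)..0, 2 * u t x * ut t x)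
        = ∫ x in (-1:ℝ)..0, 2 * (u t x * uxx t x) := by
      apply intervalIntegral.integral_congr
      intro x hx
      rw [hIcc] at hx
      show 2 * u t x * ut t x = 2 * (u t x * uxx t x)
      rw [heat t ht x hx]; ring
    rw [hcongr, intervalIntegral.integral_const_mul]
    rw [hbu t ht] at ibp
    have : (∫ x in (-1:ℝ)..0, u t x * uxx t x)
        = u t 0 * ux t 0 - ∫ x in (-1:ℝ)..0, (ux t x)^2 := by
      rw [hsplit] at ibp; linarith
    rw [this]; ring
  -- the Lyapunov functional
  set Φ : ℝ → ℝ := fun t => (∫ x in (-1:ℝ)..0, (u t x)^2) + (u t 0)^2 with hΦdef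
  -- derivative of Φ at interior points
  have hΦ' : ∀ t₀ ∈ Ioo (0:ℝ) T, HasDerivAt Φ
      (-2 * (u t₀ 0)^2 - 2 * ∫ x in (-1:ℝ)..0, (ux t₀ x)^2) t₀ := by
    intro t₀ ht₀
    have ht₀T : t₀ ∈ Icc (0:ℝ) T := ⟨le_of_lt ht₀.1, le_of_lt ht₀.2⟩
    have hsq : HasDerivAt (fun t => (u t 0)^2) (2 * H t₀ * (-H t₀ - gc t₀)) t₀ := by
      have hH2 : HasDerivAt (fun t => (H t)^2) (2 * H t₀ * (-H t₀ - gc t₀)) t₀ := by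
        have := (hH' t₀).pow 2
        refine this.congr_deriv ?_
        ring
      apply hH2.congr_of_eventuallyEq
      refine Filter.eventually_of_mem (Icc_mem_nhds ht₀.1 ht₀.2) (fun t ht => ?_)
      show u t 0 ^ 2 = H t ^ 2
      rw [hHu t ht]
    have htot := (hG t₀ ht₀).add hsq
    rw [hIBP t₀ ht₀T] at htot
    refine htot.congr_deriv ?_
    symm
    rw [← hHu t₀ ht₀T, hgc_eq t₀ ht₀T]
    show _ = 2 * (u t₀ 0 * ux t₀ 0) - 2 * (∫ x in (-1:ℝ)..0, (ux t₀ x)^2)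
      + 2 * u t₀ 0 * (-(u t₀ 0) - ux t₀ 0)
    ring
  -- continuity of Φ on [0,T]
  have hΦcont : ContinuousOn Φ (Icc (0:ℝ) T) := by
    have hGc : Continuous fun t => ∫ x in (-1:ℝ)..0, (u (cT t) (cX x))^2 := by
      apply intervalIntegral.continuous_parametric_intervalIntegral_of_continuous'
        (f := fun t x => (u (cT t) (cX x))^2) (μ := volume)
      have hclamp : Continuous (fun p : ℝ × ℝ => (cT p.1, cX p.2)) := by fun_prop
      have : Continuous ((fun p : ℝ × ℝ => u p.1 p.2) ∘ fun p : ℝ × ℝ => (cT p.1, cX p.2)) :=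
        contu.comp_continuous hclamp (fun p => ⟨hcT_mem _, hcX_mem _⟩)
      exact this.pow 2
    have hGcont : ContinuousOn (fun t => ∫ x in (-1:ℝ)..0, (u t x)^2) (Icc (0:ℝ) T) := by
      apply hGc.continuousOn.congr
      intro t ht
      apply intervalIntegral.integral_congr
      intro x hx
      rw [hIcc] at hx
      simp [hcT_eq t ht, hcX_eq x hx]
    have hbcont : ContinuousOn (fun t => (u t 0)^2) (Icc (0:ℝ) T) := by
      apply ((hHcont.pow 2).continuousOn (s := Icc (0:ℝ) T)).congr
      intro t ht
      simp [hHu t ht]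
    exact hGcont.add hbcont
  -- Φ is antitone on [0,T]
  have hΦanti : AntitoneOn Φ (Icc (0:ℝ) T) := by
    apply antitoneOn_of_deriv_nonpos (convex_Icc 0 T) hΦcont
    · rw [interior_Icc]
      exact fun t ht => (hΦ' t ht).differentiableAt.differentiableWithinAt
    · rw [interior_Icc]
      intro t ht
      rw [(hΦ' t ht).deriv]
      have h1 : (0:ℝ) ≤ (u t 0)^2 := sq_nonneg _
      have h2 : (0:ℝ) ≤ ∫ x in (-1:ℝ)..0, (ux t x)^2 :=
        intervalIntegral.integral_nonneg (by norm_num) (fun x _ => sq_nonneg _)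
      linarith
  -- Φ 0 = 0
  have hΦ0 : Φ 0 = 0 := by
    have h1 : (∫ x in (-1:ℝ)..0, (u 0 x)^2) = 0 := by
      have : (∫ x in (-1:ℝ)..0, (u 0 x)^2) = ∫ x in (-1:ℝ)..0, (0:ℝ) := by
        apply intervalIntegral.integral_congr
        intro x hx
        rw [hIcc] at hx
        show (u 0 x)^2 = 0
        rw [hinit x hx]; ring
      rw [this, intervalIntegral.integral_zero]
    have h2 : u 0 0 = 0 := hinit 0 ⟨by norm_num, le_refl 0⟩
    simp [hΦdef, h1, h2]
  -- conclude Φ t = 0, both terms vanish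
  intro t ht
  have hΦt : Φ t ≤ 0 := by
    rw [← hΦ0]
    exact hΦanti ⟨le_refl 0, hT⟩ ht ht.1
  have h1 : (0:ℝ) ≤ ∫ x in (-1:ℝ)..0, (u t x)^2 :=
    intervalIntegral.integral_nonneg (by norm_num) (fun x _ => sq_nonneg _)
  have h2 : (0:ℝ) ≤ (u t 0)^2 := sq_nonneg _
  have hint0 : (∫ x in (-1:ℝ)..0, (u t x)^2) = 0 := by
    simp only [hΦdef] at hΦt; linarith
  -- zero integral of a continuous nonnegative function
  have hc : ContinuousOn (fun x => u t x) (Icc (-1:ℝ) 0) := sec u contu t ht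
  have hint : IntervalIntegrable (fun x => (u t x)^2) volume (-1) 0 := by
    apply ContinuousOn.intervalIntegrable; rw [hIcc]; exact hc.pow 2
  have hae : (fun x => (u t x)^2) =ᵐ[volume.restrict (Ioc (-1:ℝ) 0)] 0 :=
    (intervalIntegral.integral_eq_zero_iff_of_le_of_nonneg_ae (by norm_num)
      (Filter.Eventually.of_forall (fun x => sq_nonneg _)) hint).mp hint0
  rw [MeasureTheory.restrict_Ioc_eq_restrict_Icc] at hae
  have heq : EqOn (fun x => (u t x)^2) 0 (Icc (-1:ℝ) 0) := by
    apply Measure.eqOn_of_ae_eq hae (hc.pow 2) continuousOn_const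
    rw [interior_Icc, closure_Ioo (by norm_num : (-1:ℝ) ≠ 0)]
  intro x hx
  have := heq hx
  simpa using pow_eq_zero_iff (n := 2) (by norm_num) |>.mp this
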